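/- arXiv:1404.5153 — 2 statements merged into one kernel-verified Lean document; each statement's English description precedes it below -/
import Mathlib

section
/- For every integer n ≥ 2, every dimension d ≥ 1, every even-parity-oblivious quantum random access code {ρ_x : x ∈ {0,1}^n} of d×d density matrices, and every decoding strategy (M_t)_{t=1}^n, the average-case bias satisfies (1/n) Σ_{t=1}^n (2 p_t − 1) ≤ 1/√n. -/
open Matrix BigOperators Finset
open scoped ComplexOrder ComplexInnerProductSpace

lemma trace_conjT_mul (d : ℕ) (X Y : Matrix (Fin d) (Fin d) ℂ) :
    (Xᴴ * Y).trace = ∑ p : Fin d × Fin d, star (X p.2 p.1) * Y p.2 p.1 := by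
  rw [Matrix.trace, Fintype.sum_prod_type]
  simp only [Matrix.diag_apply, Matrix.mul_apply, Matrix.conjTranspose_apply]

lemma matrix_cs {d : ℕ} (X Y : Matrix (Fin d) (Fin d) ℂ) :
    ((Xᴴ * Y).trace.re)^2 ≤ (Xᴴ * X).trace.re * (Yᴴ * Y).trace.re := by
  let x : EuclideanSpace ℂ (Fin d × Fin d) := WithLp.toLp 2 (fun p : Fin d × Fin d => X p.2 p.1)
  let y : EuclideanSpace ℂ (Fin d × Fin d) := WithLp.toLp 2 (fun p : Fin d × Fin d => Y p.2 p.1)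
  have hxy : (Xᴴ * Y).trace = ⟪x, y⟫ := by
    rw [trace_conjT_mul, PiLp.inner_apply]
    simp [x, y, RCLike.inner_apply]
    exact Finset.sum_congr rfl fun _ _ => mul_comm _ _
  have hxx : (Xᴴ * X).trace.re = ‖x‖^2 := by
    rw [trace_conjT_mul, ← inner_self_eq_norm_sq (𝕜 := ℂ) x, PiLp.inner_apply]
    simp [x, RCLike.inner_apply]
    simp only [← Complex.ofReal_pow, Complex.ofReal_re, Complex.sq_norm, Complex.normSq_apply]
  have hyy : (Yᴴ * Y).trace.re = ‖y‖^2 := by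
    rw [trace_conjT_mul, ← inner_self_eq_norm_sq (𝕜 := ℂ) y, PiLp.inner_apply]
    simp [y, RCLike.inner_apply]
    simp only [← Complex.ofReal_pow, Complex.ofReal_re, Complex.sq_norm, Complex.normSq_apply]
  rw [hxy, hxx, hyy]
  calc (⟪x, y⟫).re ^ 2 ≤ ‖(⟪x, y⟫ : ℂ)‖^2 := by
        rw [Complex.sq_norm, Complex.normSq_apply]
        nlinarith [sq_nonneg (⟪x, y⟫ : ℂ).im]
    _ ≤ (‖x‖ * ‖y‖)^2 := by
        apply pow_le_pow_left₀ (norm_nonneg _) (norm_inner_le_norm x y)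
    _ = ‖x‖^2 * ‖y‖^2 := by ring

lemma psd_trace_re_nonneg {d : ℕ} {A : Matrix (Fin d) (Fin d) ℂ} (hA : A.PosSemidef) :
    0 ≤ A.trace.re := by
  have hdiag : ∀ i, 0 ≤ A i i := fun i => hA.diag_nonneg
  rw [Matrix.trace, Complex.re_sum]
  exact Finset.sum_nonneg fun i _ => (Complex.le_def.mp (hdiag i)).1

lemma trace_mul_psd_re_nonneg {d : ℕ} {A P : Matrix (Fin d) (Fin d) ℂ}
    (hA : A.PosSemidef) (hP : P.PosSemidef) : 0 ≤ (A * P).trace.re := by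
  obtain ⟨Z, rfl⟩ : ∃ Z : Matrix (Fin d) (Fin d) ℂ, A = Zᴴ * Z := by
    open scoped MatrixOrder in exact CStarAlgebra.nonneg_iff_eq_star_mul_self.mp hA.nonneg
  rw [Matrix.mul_assoc, Matrix.trace_mul_comm]
  exact psd_trace_re_nonneg (hP.mul_mul_conjTranspose_same Z)

lemma one_sub_sq_psd {d : ℕ} {M : Matrix (Fin d) (Fin d) ℂ} (h0 : M.PosSemidef)
    (h1 : ((1:Matrix (Fin d) (Fin d) ℂ) - M).PosSemidef) :
    ((1:Matrix (Fin d) (Fin d) ℂ) - (2*M-1)*(2*M-1)).PosSemidef := by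
  obtain ⟨S, hSh, hs⟩ : ∃ S : Matrix (Fin d) (Fin d) ℂ, Sᴴ = S ∧ S * S = M :=
    by open scoped MatrixOrder in exact ⟨CFC.sqrt M, (CFC.sqrt_nonneg M).posSemidef.isHermitian,
      CFC.sqrt_mul_sqrt_self M h0.nonneg⟩
  have hp : (M - M * M).PosSemidef := by
    have h2 := h1.conjTranspose_mul_mul_same S
    rw [hSh] at h2
    have key : S * (1 - M) * S = M - M * M := by rw [← hs]; noncomm_ring
    rwa [key] at h2
  have heq : (1:Matrix (Fin d) (Fin d) ℂ) - (2*M-1)*(2*M-1)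
      = (M - M*M) + (M - M*M) + ((M - M*M) + (M - M*M)) := by noncomm_ring
  rw [heq]
  exact (hp.add hp).add (hp.add hp)

lemma trace_mul_b_sq_le_one {d : ℕ} {R Mt : Matrix (Fin d) (Fin d) ℂ}
    (hR : R.PosSemidef) (htr : R.trace = 1) (h0 : Mt.PosSemidef)
    (h1 : ((1:Matrix (Fin d) (Fin d) ℂ) - Mt).PosSemidef) :
    (R * ((2*Mt-1) * (2*Mt-1))).trace.re ≤ 1 := by
  have h := trace_mul_psd_re_nonneg hR (one_sub_sq_psd h0 h1)
  rw [Matrix.mul_sub, Matrix.mul_one, Matrix.trace_sub, Complex.sub_re, htr] at h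
  simpa using h

lemma cs_state {d : ℕ} {R C : Matrix (Fin d) (Fin d) ℂ} (hR : R.PosSemidef)
    (htr : R.trace = 1) (hC : C.IsHermitian) :
    ((R * C).trace.re)^2 ≤ ((R * (C * C)).trace).re := by
  obtain ⟨Z, rfl⟩ : ∃ Z : Matrix (Fin d) (Fin d) ℂ, R = Zᴴ * Z := by
    open scoped MatrixOrder in exact CStarAlgebra.nonneg_iff_eq_star_mul_self.mp hR.nonneg
  have h := matrix_cs Z (Z * C)
  have e0 : Zᴴ * (Z * C) = (Zᴴ * Z) * C := by rw [Matrix.mul_assoc]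
  have e1 : ((Z * C)ᴴ * (Z * C)).trace = ((Zᴴ * Z) * (C * C)).trace := by
    rw [Matrix.conjTranspose_mul, hC.eq]
    rw [show (C * Zᴴ) * (Z * C) = C * ((Zᴴ * Z) * C) from by noncomm_ring,
      Matrix.trace_mul_comm,
      show ((Zᴴ * Z) * C) * C = (Zᴴ * Z) * (C * C) from by noncomm_ring]
  rw [e0, e1, htr] at h
  simpa using h
/-- Every even-parity-oblivious quantum random access code of `n ≥ 2` bits
into `d × d` density matrices, together with any decoding strategy, has average-case bias
at most `1/√n`. -/
theorem even_parity_oblivious_qrac_average_case_bias_le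
    (n d : ℕ) (hn : 2 ≤ n) (hd : 1 ≤ d)
    (ρ : (Fin n → ZMod 2) → Matrix (Fin d) (Fin d) ℂ)
    (hpsd : ∀ x, (ρ x).PosSemidef)
    (htr : ∀ x, (ρ x).trace = 1)
    (hepo : ∀ S : Finset (Fin n), 2 ≤ S.card → Even S.card →
      ∑ x ∈ Finset.univ.filter (fun x : Fin n → ZMod 2 => ∑ i ∈ S, x i = 0), ρ x =
      ∑ x ∈ Finset.univ.filter (fun x : Fin n → ZMod 2 => ∑ i ∈ S, x i = 1), ρ x)
    (M : Fin n → Matrix (Fin d) (Fin d) ℂ)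
    (hherm : ∀ t, (M t).IsHermitian)
    (hpos : ∀ t, (M t).PosSemidef)
    (hle1 : ∀ t, ((1 : Matrix (Fin d) (Fin d) ℂ) - M t).PosSemidef)
    (p : Fin n → ℝ)
    (hp : ∀ t, p t = (1 / 2 ^ n : ℝ) * ∑ x : Fin n → ZMod 2,
      (if x t = 0 then ((ρ x * M t).trace).re
       else ((ρ x * (1 - M t)).trace).re)) :
    (1 / n : ℝ) * ∑ t : Fin n, (2 * p t - 1) ≤ 1 / Real.sqrt n := by
  classical
  have h2n : (0:ℝ) < 2 ^ n := by positivity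
  have hcard : ((Finset.univ : Finset (Fin n → ZMod 2)).card : ℝ) = 2 ^ n := by
    rw [Finset.card_univ, Fintype.card_fun]
    simp
  have hzm : ∀ z : ZMod 2, z = 0 ∨ z = 1 := by decide
  set B : Fin n → Matrix (Fin d) (Fin d) ℂ := fun t => 2 * M t - 1 with hBdef
  have hBeq : ∀ t, B t = 2 * M t - 1 := fun t => rfl
  have hBherm : ∀ t, (B t).IsHermitian := by
    intro t
    rw [hBeq t, show (2 * M t - 1 : Matrix (Fin d) (Fin d) ℂ) = (M t + M t) - 1 from by
      noncomm_ring]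
    exact ((hherm t).add (hherm t)).sub Matrix.isHermitian_one
  set ε : (Fin n → ZMod 2) → Fin n → ℝ := fun x t => if x t = 0 then 1 else -1 with hεdef
  -- Step 1 : rewrite each bias
  have step1 : ∀ t, 2 * p t - 1 =
      (1 / 2 ^ n : ℝ) * ∑ x : Fin n → ZMod 2, ε x t * ((ρ x * B t).trace).re := by
    intro t
    rw [hp t]
    have hpt : ∀ x : Fin n → ZMod 2,
        ε x t * ((ρ x * B t).trace).re
        = 2 * (if x t = 0 then ((ρ x * M t).trace).re
               else ((ρ x * (1 - M t)).trace).re) - 1 := by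
      intro x
      have hexp : ρ x * B t = (ρ x * M t + ρ x * M t) - ρ x := by
        rw [hBeq t]; noncomm_ring
      have htrB : ((ρ x * B t).trace).re = 2 * ((ρ x * M t).trace).re - 1 := by
        rw [hexp, Matrix.trace_sub, Matrix.trace_add, htr x]
        simp [Complex.sub_re, Complex.add_re]; ring
      have hexp1 : ρ x * (1 - M t) = ρ x - ρ x * M t := by noncomm_ring
      have htrM : ((ρ x * (1 - M t)).trace).re = 1 - ((ρ x * M t).trace).re := by
        rw [hexp1, Matrix.trace_sub, htr x]; simp [Complex.sub_re]
      rcases hzm (x t) with h | h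
      · have hε1 : ε x t = 1 := by simp only [hεdef]; rw [if_pos h]
        rw [if_pos h, hε1, one_mul, htrB]
      · have hne : x t ≠ 0 := by rw [h]; decide
        have hε1 : ε x t = -1 := by simp only [hεdef]; rw [if_neg hne]
        rw [if_neg hne, hε1, htrB, htrM]; ring
    rw [show (∑ x : Fin n → ZMod 2, ε x t * ((ρ x * B t).trace).re)
        = ∑ x : Fin n → ZMod 2, (2 * (if x t = 0 then ((ρ x * M t).trace).re
            else ((ρ x * (1 - M t)).trace).re) - 1) from
      Finset.sum_congr rfl fun x _ => hpt x]
    rw [Finset.sum_sub_distrib, Finset.sum_const, ← Finset.mul_sum]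
    rw [nsmul_eq_mul, hcard]
    field_simp
  -- C x and step 2
  set C : (Fin n → ZMod 2) → Matrix (Fin d) (Fin d) ℂ :=
    fun x => ∑ t : Fin n, ((ε x t : ℝ) : ℂ) • B t with hCdef
  have hCeq : ∀ x, C x = ∑ t : Fin n, ((ε x t : ℝ) : ℂ) • B t := fun x => rfl
  have hxC : ∀ x, ((ρ x * C x).trace).re
      = ∑ t : Fin n, ε x t * ((ρ x * B t).trace).re := by
    intro x
    rw [hCeq x, Finset.mul_sum, Matrix.trace_sum, Complex.re_sum]
    refine Finset.sum_congr rfl fun t _ => ?_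
    rw [Matrix.mul_smul, Matrix.trace_smul, smul_eq_mul, Complex.re_ofReal_mul]
  have step2 : ∑ t : Fin n, (2 * p t - 1)
      = (1 / 2 ^ n : ℝ) * ∑ x : Fin n → ZMod 2, ((ρ x * C x).trace).re := by
    calc ∑ t : Fin n, (2 * p t - 1)
        = ∑ t : Fin n, (1 / 2 ^ n : ℝ) * ∑ x : Fin n → ZMod 2,
            ε x t * ((ρ x * B t).trace).re := Finset.sum_congr rfl fun t _ => step1 t
      _ = (1 / 2 ^ n : ℝ) * ∑ x : Fin n → ZMod 2, ∑ t : Fin n,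
            ε x t * ((ρ x * B t).trace).re := by
            rw [← Finset.mul_sum, Finset.sum_comm]
      _ = (1 / 2 ^ n : ℝ) * ∑ x : Fin n → ZMod 2, ((ρ x * C x).trace).re := by
            rw [Finset.sum_congr rfl fun x _ => (hxC x).symm]
  -- C x is Hermitian
  have hCherm : ∀ x, (C x).IsHermitian := by
    intro x
    show (C x)ᴴ = C x
    rw [hCeq x, Matrix.conjTranspose_sum]
    refine Finset.sum_congr rfl fun t _ => ?_
    rw [Matrix.conjTranspose_smul, (hBherm t).eq, Complex.star_def, Complex.conj_ofReal]
  -- Step 3 : Cauchy-Schwarz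
  have step3 : ∀ x, (((ρ x * C x).trace).re)^2 ≤ ((ρ x * (C x * C x)).trace).re :=
    fun x => cs_state (hpsd x) (htr x) (hCherm x)
  -- expansion of the square
  have expand : ∀ x, ((ρ x * (C x * C x)).trace).re
      = ∑ s : Fin n, ∑ t : Fin n,
          (ε x s * ε x t) * ((ρ x * (B s * B t)).trace).re := by
    intro x
    have hCC : C x * C x = ∑ s : Fin n, ∑ t : Fin n,
        ((ε x s * ε x t : ℝ) : ℂ) • (B s * B t) := by
      rw [hCeq x, Finset.sum_mul_sum]
      refine Finset.sum_congr rfl fun s _ => Finset.sum_congr rfl fun t _ => ?_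
      rw [smul_mul_smul_comm, Complex.ofReal_mul]
    rw [hCC, Finset.mul_sum, Matrix.trace_sum, Complex.re_sum]
    refine Finset.sum_congr rfl fun s _ => ?_
    rw [Finset.mul_sum, Matrix.trace_sum, Complex.re_sum]
    refine Finset.sum_congr rfl fun t _ => ?_
    rw [Matrix.mul_smul, Matrix.trace_smul, smul_eq_mul, Complex.re_ofReal_mul]
  -- cross terms vanish
  have hcross : ∀ s t : Fin n, s ≠ t →
      ∑ x : Fin n → ZMod 2,
        (ε x s * ε x t) * ((ρ x * (B s * B t)).trace).re = 0 := by
    intro s t hst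
    set D := B s * B t with hD
    set g : (Fin n → ZMod 2) → ℝ := fun x => ((ρ x * D).trace).re with hg
    have hw : ∀ x : Fin n → ZMod 2,
        ε x s * ε x t = if x s + x t = 0 then (1:ℝ) else -1 := by
      intro x
      have e11 : (1:ZMod 2) + 1 = 0 := by decide
      have e1 : (1:ZMod 2) ≠ 0 := by decide
      rcases hzm (x s) with h1 | h1 <;> rcases hzm (x t) with h2 | h2 <;>
        simp [hεdef, h1, h2, e11, e1]
    have key : ∀ A : Finset (Fin n → ZMod 2),
        ∑ x ∈ A, g x = (((∑ x ∈ A, ρ x) * D).trace).re := by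
      intro A
      rw [Finset.sum_mul, Matrix.trace_sum, Complex.re_sum]
    have hepo2 := hepo {s, t} (by rw [Finset.card_pair hst]) (by
      rw [Finset.card_pair hst]; exact even_two)
    simp only [Finset.sum_pair hst] at hepo2
    have hfilter : Finset.univ.filter (fun x : Fin n → ZMod 2 => ¬ (x s + x t = 0))
        = Finset.univ.filter (fun x : Fin n → ZMod 2 => x s + x t = 1) := by
      apply Finset.filter_congr
      intro x _
      constructor
      · intro h
        rcases hzm (x s + x t) with h0 | h0
        · exact absurd h0 h
        · exact h0
      · intro h h0
        rw [h0] at h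
        exact absurd h (by decide)
    calc ∑ x : Fin n → ZMod 2, (ε x s * ε x t) * g x
        = ∑ x : Fin n → ZMod 2, (if x s + x t = 0 then (1:ℝ) else -1) * g x :=
          Finset.sum_congr rfl fun x _ => by rw [hw x]
      _ = (∑ x ∈ Finset.univ.filter (fun x : Fin n → ZMod 2 => x s + x t = 0),
            (if x s + x t = 0 then (1:ℝ) else -1) * g x)
          + ∑ x ∈ Finset.univ.filter (fun x : Fin n → ZMod 2 => ¬ (x s + x t = 0)),
            (if x s + x t = 0 then (1:ℝ) else -1) * g x :=
          (Finset.sum_filter_add_sum_filter_not _ _ _).symm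
      _ = (∑ x ∈ Finset.univ.filter (fun x : Fin n → ZMod 2 => x s + x t = 0), g x)
          - ∑ x ∈ Finset.univ.filter (fun x : Fin n → ZMod 2 => x s + x t = 1), g x := by
          rw [hfilter]
          congr 1
          · refine Finset.sum_congr rfl fun x hx => ?_
            rw [if_pos (Finset.mem_filter.mp hx).2, one_mul]
          · rw [← Finset.sum_neg_distrib]
            refine Finset.sum_congr rfl fun x hx => ?_
            have hx1 := (Finset.mem_filter.mp hx).2
            rw [if_neg (by rw [hx1]; decide), neg_one_mul]
      _ = 0 := by rw [key, key, hepo2, sub_self]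
  -- diagonal bound
  have hdiag : ∀ t : Fin n,
      ∑ x : Fin n → ZMod 2,
        (ε x t * ε x t) * ((ρ x * (B t * B t)).trace).re ≤ 2 ^ n := by
    intro t
    have h1 : ∀ x : Fin n → ZMod 2, ε x t * ε x t = 1 := by
      intro x; rcases hzm (x t) with h | h <;> simp [hεdef, h]
    calc ∑ x : Fin n → ZMod 2, (ε x t * ε x t) * ((ρ x * (B t * B t)).trace).re
        = ∑ x : Fin n → ZMod 2, ((ρ x * (B t * B t)).trace).re :=
          Finset.sum_congr rfl fun x _ => by rw [h1 x, one_mul]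
      _ ≤ ∑ _x : Fin n → ZMod 2, (1:ℝ) := by
          refine Finset.sum_le_sum fun x _ => ?_
          rw [hBeq t]
          exact trace_mul_b_sq_le_one (hpsd x) (htr x) (hpos t) (hle1 t)
      _ = 2 ^ n := by rw [Finset.sum_const, nsmul_eq_mul, hcard, mul_one]
  -- step 5
  have step5 : ∑ x : Fin n → ZMod 2, ((ρ x * (C x * C x)).trace).re ≤ n * 2 ^ n := by
    calc ∑ x : Fin n → ZMod 2, ((ρ x * (C x * C x)).trace).re
        = ∑ x : Fin n → ZMod 2, ∑ s : Fin n, ∑ t : Fin n,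
            (ε x s * ε x t) * ((ρ x * (B s * B t)).trace).re :=
          Finset.sum_congr rfl fun x _ => expand x
      _ = ∑ s : Fin n, ∑ x : Fin n → ZMod 2, ∑ t : Fin n,
            (ε x s * ε x t) * ((ρ x * (B s * B t)).trace).re := Finset.sum_comm
      _ = ∑ s : Fin n, ∑ t : Fin n, ∑ x : Fin n → ZMod 2,
            (ε x s * ε x t) * ((ρ x * (B s * B t)).trace).re :=
          Finset.sum_congr rfl fun s _ => Finset.sum_comm
      _ = ∑ s : Fin n, ∑ x : Fin n → ZMod 2,
            (ε x s * ε x s) * ((ρ x * (B s * B s)).trace).re := by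
          refine Finset.sum_congr rfl fun s _ => ?_
          exact Finset.sum_eq_single_of_mem s (Finset.mem_univ s)
            (fun t _ hts => hcross s t (Ne.symm hts))
      _ ≤ ∑ _s : Fin n, (2:ℝ) ^ n := Finset.sum_le_sum fun s _ => hdiag s
      _ = n * 2 ^ n := by rw [Finset.sum_const, nsmul_eq_mul, Finset.card_univ,
            Fintype.card_fin]
  -- final assembly
  have hnpos : (0:ℝ) < n := by
    have : (2:ℝ) ≤ n := by exact_mod_cast hn
    linarith
  have hsqpos : 0 < Real.sqrt n := Real.sqrt_pos.mpr hnpos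
  by_cases hle : (∑ t : Fin n, (2 * p t - 1)) ≤ 0
  · have h1 : (1 / n : ℝ) * ∑ t : Fin n, (2 * p t - 1) ≤ 0 :=
      mul_nonpos_of_nonneg_of_nonpos (by positivity) hle
    linarith [le_of_lt (div_pos one_pos hsqpos)]
  · push_neg at hle
    have hb : (∑ t : Fin n, (2 * p t - 1)) ≤ Real.sqrt n := by
      apply Real.le_sqrt_of_sq_le
      have hT2 : (∑ x : Fin n → ZMod 2, ((ρ x * C x).trace).re) ^ 2
          ≤ 2 ^ n * ∑ x : Fin n → ZMod 2, (((ρ x * C x).trace).re) ^ 2 := by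
        have := sq_sum_le_card_mul_sum_sq
          (s := (Finset.univ : Finset (Fin n → ZMod 2)))
          (f := fun x => ((ρ x * C x).trace).re)
        rwa [hcard] at this
      have hsum2 : ∑ x : Fin n → ZMod 2, (((ρ x * C x).trace).re) ^ 2
          ≤ n * 2 ^ n :=
        le_trans (Finset.sum_le_sum fun x _ => step3 x) step5
      calc (∑ t : Fin n, (2 * p t - 1)) ^ 2 = (1 / 2 ^ n : ℝ) ^ 2
            * (∑ x : Fin n → ZMod 2, ((ρ x * C x).trace).re) ^ 2 := by
            rw [step2]; ring
        _ ≤ (1 / 2 ^ n : ℝ) ^ 2 * (2 ^ n * (n * 2 ^ n)) := by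
            refine mul_le_mul_of_nonneg_left ?_ (by positivity)
            exact le_trans hT2 (by
              refine mul_le_mul_of_nonneg_left hsum2 (by positivity))
        _ = n := by field_simp
    have h2 : (1 / n : ℝ) * ∑ t : Fin n, (2 * p t - 1)
        ≤ (1 / n : ℝ) * Real.sqrt n :=
      mul_le_mul_of_nonneg_left hb (by positivity)
    have h3 : (1 / n : ℝ) * Real.sqrt n = 1 / Real.sqrt n := by
      rw [div_mul_eq_mul_div, one_mul,
        div_eq_div_iff (ne_of_gt hnpos) (ne_of_gt hsqpos),
        Real.mul_self_sqrt hnpos.le, one_mul]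
    linarith
end

section
/- There exists a constant C > 0 such that for every integer n ≥ 2, the optimal classical bias β_n of the INDEX^n game—namely β_n := max over functions a : {0,1}^n → {0,1} and b : {1,…,n} → {0,1} of (2/(n·2^n)) · #{(s,t) : a(s) ⊕ b(t) = s_t} − 1—satisfies |β_n − √(2/(π n))| ≤ C · n^{−3/2}; that is, β_n = √(2/(π n)) · (1 + O(1/n)). -/
open BigOperators Finset

lemma cb_sq_wallis (m : ℕ) :
    (((2*m).choose m : ℝ)/4^m)^2 * (Real.Wallis.W m * (2*m+1)) = 1 := by
  have h0 : 2*m - m = m := by omega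
  have hc : ((2*m).choose m : ℝ) * m.factorial * m.factorial = (2*m).factorial := by
    have := Nat.choose_mul_factorial_mul_factorial (by omega : m ≤ 2*m)
    rw [h0] at this
    exact_mod_cast congrArg (Nat.cast : ℕ → ℝ) this
  rw [Real.Wallis.W_eq_factorial_ratio]
  have hf : (m.factorial : ℝ) ≠ 0 := by positivity
  have hf2 : ((2*m).factorial : ℝ) ≠ 0 := by positivity
  have h4 : (4:ℝ)^m ≠ 0 := by positivity
  have hm : (0:ℝ) < 2*(m:ℝ)+1 := by positivity
  have h24 : (2:ℝ)^(4*m) = (4^m)^2 := by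
    rw [show (4:ℝ) = 2^2 by norm_num, ← pow_mul, ← pow_mul]
    congr 1; ring
  field_simp
  rw [h24, ← hc]
  ring

lemma cb_pos (m : ℕ) : (0:ℝ) < ((2*m).choose m : ℝ)/4^m := by
  have : (0:ℝ) < ((2*m).choose m : ℝ) := by
    exact_mod_cast Nat.choose_pos (by omega : m ≤ 2*m)
  positivity

lemma cb_sq_lower (m : ℕ) :
    2 ≤ (((2*m).choose m : ℝ)/4^m)^2 * (Real.pi * (2*m+1)) := by
  have hW := Real.Wallis.W_le m
  have hid := cb_sq_wallis m
  have hpos := cb_pos m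
  have h2 : (0:ℝ) < 2*(m:ℝ)+1 := by positivity
  have key : 1 ≤ (((2*m).choose m : ℝ)/4^m)^2 * (Real.pi/2 * (2*m+1)) := by
    calc (1:ℝ) = (((2*m).choose m : ℝ)/4^m)^2 * (Real.Wallis.W m * (2*m+1)) := hid.symm
      _ ≤ _ := by
        apply mul_le_mul_of_nonneg_left _ (by positivity)
        exact mul_le_mul_of_nonneg_right hW h2.le
  nlinarith [key]

lemma cb_sq_upper (m : ℕ) :
    (((2*m).choose m : ℝ)/4^m)^2 * (Real.pi * (2*m+1)^2) ≤ 2*(2*m+2) := by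
  have hW := Real.Wallis.le_W m
  have hid := cb_sq_wallis m
  have hpos := cb_pos m
  have h1 : (0:ℝ) < 2*(m:ℝ)+2 := by positivity
  have h2 : (0:ℝ) < 2*(m:ℝ)+1 := by positivity
  have h3 : (((2*m).choose m : ℝ)/4^m)^2 *
      (Real.pi * (2*(m:ℝ)+1)^2 / (2*(2*m+2))) ≤ 1 := by
    have heq : Real.pi * (2*(m:ℝ)+1)^2 / (2*(2*m+2))
        = (2*(m:ℝ)+1)/(2*m+2) * (Real.pi/2) * (2*m+1) := by
      field_simp
    rw [heq]
    calc (((2*m).choose m : ℝ)/4^m)^2 * ((2*(m:ℝ)+1)/(2*m+2) * (Real.pi/2) * (2*m+1))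
        ≤ (((2*m).choose m : ℝ)/4^m)^2 * (Real.Wallis.W m * (2*m+1)) := by
          apply mul_le_mul_of_nonneg_left _ (by positivity)
          exact mul_le_mul_of_nonneg_right hW h2.le
      _ = 1 := hid
  rw [← mul_div_assoc, div_le_one (by positivity)] at h3
  linarith

lemma sum_choose_max (n : ℕ) (hn : 1 ≤ n) :
    ∑ k ∈ range (n+1), (n.choose k) * max (n-k) k
      = n * 2^(n-1) + n * ((n-1).choose (n/2)) := by
  set h := n/2 with hh
  have hhn : h + 1 ≤ n + 1 := by omega
  have step : ∀ k ∈ range (n+1), (n.choose k) * max (n-k) k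
      = n * (if k ≤ h then (n-1).choose k else (n-1).choose (k-1)) := by
    intro k hk
    rw [mem_range] at hk
    by_cases hkh : k ≤ h
    · rw [if_pos hkh]
      have hmax : max (n-k) k = n - k := by omega
      rw [hmax]
      have hkn : k ≤ n := by omega
      have hkn1 : k ≤ n - 1 := by omega
      have e1 : n.choose k = n.choose (n-k) := (Nat.choose_symm hkn).symm
      have e2 : ((n-1)+1) * (n-1).choose (n-1-k) = ((n-1)+1).choose ((n-1-k)+1) * ((n-1-k)+1) :=
        Nat.add_one_mul_choose_eq (n-1) (n-1-k)
      have h1 : (n-1)+1 = n := by omega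
      have h2 : (n-1-k)+1 = n-k := by omega
      rw [h1, h2] at e2
      have e3 : (n-1).choose (n-1-k) = (n-1).choose k := Nat.choose_symm hkn1
      rw [e1, ← e2, e3]
    · rw [if_neg hkh]
      have hmax : max (n-k) k = k := by omega
      have e2 : ((n-1)+1) * (n-1).choose (k-1) = ((n-1)+1).choose ((k-1)+1) * ((k-1)+1) :=
        Nat.add_one_mul_choose_eq (n-1) (k-1)
      have h1 : (n-1)+1 = n := by omega
      have h2 : (k-1)+1 = k := by omega
      rw [h1, h2] at e2
      rw [hmax, ← e2, Nat.mul_comm]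
  rw [Finset.sum_congr rfl step, ← Finset.mul_sum, ← Nat.mul_add]
  congr 1
  rw [range_eq_Ico, ← Finset.sum_Ico_consecutive _ (Nat.zero_le (h+1)) hhn]
  have p1 : ∑ k ∈ Ico 0 (h+1), (if k ≤ h then (n-1).choose k else (n-1).choose (k-1))
      = ∑ k ∈ range (h+1), (n-1).choose k := by
    rw [← range_eq_Ico]
    apply Finset.sum_congr rfl
    intro k hk; rw [mem_range] at hk; rw [if_pos (by omega)]
  have p2 : ∑ k ∈ Ico (h+1) (n+1), (if k ≤ h then (n-1).choose k else (n-1).choose (k-1))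
      = ∑ k ∈ Ico h n, (n-1).choose k := by
    rw [Finset.sum_Ico_eq_sum_range, Finset.sum_Ico_eq_sum_range]
    apply Finset.sum_congr (by congr 1; omega)
    intro i hi; rw [mem_range] at hi
    rw [if_neg (by omega)]
    congr 1; omega
  have p3 : ∑ k ∈ range h, (n-1).choose k + ∑ k ∈ Ico h n, (n-1).choose k
      = ∑ k ∈ range n, (n-1).choose k := by
    simp only [range_eq_Ico]
    exact Finset.sum_Ico_consecutive (fun k => (n-1).choose k) (Nat.zero_le h) (by omega : h ≤ n)
  have p4 : ∑ k ∈ range n, (n-1).choose k = 2^(n-1) := by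
    have hr : range n = range ((n-1)+1) := by congr 1; omega
    rw [hr, Nat.sum_range_choose]
  rw [p1, p2, Finset.sum_range_succ]
  omega

lemma zmod2_cases (x : ZMod 2) : x = 0 ∨ x = 1 := by revert x; decide

lemma zmod2_add_iff (x y z : ZMod 2) : (x + y = z) ↔ (z + y = x) := by revert x y z; decide

def zmodFinsetEquiv (n : ℕ) : (Fin n → ZMod 2) ≃ Finset (Fin n) where
  toFun u := univ.filter fun t => u t = 1
  invFun A := fun t => if t ∈ A then 1 else 0
  left_inv u := by
    funext t
    rcases zmod2_cases (u t) with h | h <;> simp [h]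
  right_inv A := by
    ext t
    simp only [Finset.mem_filter, Finset.mem_univ, true_and]
    by_cases h : t ∈ A <;> simp [h]

lemma card_filter_zero_add_one (n : ℕ) (u : Fin n → ZMod 2) :
    (univ.filter fun t => u t = 0).card + (univ.filter fun t => u t = 1).card = n := by
  have := Finset.card_filter_add_card_filter_not (s := (univ : Finset (Fin n)))
    (p := fun t => u t = 0)
  simp only [Finset.card_univ, Fintype.card_fin] at this
  have h2 : (univ.filter fun t => u t = 1) = (univ.filter fun a => ¬ u a = 0) := by
    apply Finset.filter_congr
    intro t _
    rcases zmod2_cases (u t) with h | h <;> simp [h]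
  rw [h2]
  exact this

lemma sum_G (n : ℕ) :
    ∑ u : Fin n → ZMod 2,
        max ((univ.filter fun t => u t = 0).card) ((univ.filter fun t => u t = 1).card)
      = ∑ k ∈ range (n+1), n.choose k * max (n-k) k := by
  have h1 : ∑ u : Fin n → ZMod 2,
        max ((univ.filter fun t => u t = 0).card) ((univ.filter fun t => u t = 1).card)
      = ∑ A : Finset (Fin n), max (n - A.card) A.card := by
    apply Fintype.sum_equiv (zmodFinsetEquiv n)
    intro u
    have hcard : ((zmodFinsetEquiv n) u).card = (univ.filter fun t => u t = 1).card := rfl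
    have h0 := card_filter_zero_add_one n u
    rw [hcard]
    congr 1
    omega
  rw [h1]
  rw [← Finset.powerset_univ, Finset.sum_powerset]
  simp only [Finset.card_univ, Fintype.card_fin]
  apply Finset.sum_congr rfl
  intro j hj
  have : ∀ A ∈ Finset.powersetCard j (univ : Finset (Fin n)),
      max (n - A.card) A.card = max (n - j) j := by
    intro A hA
    rw [(Finset.mem_powersetCard.1 hA).2]
  rw [Finset.sum_congr rfl this, Finset.sum_const, Finset.card_powersetCard,
    Finset.card_univ, Fintype.card_fin, smul_eq_mul]

lemma count_eq_double_sum (n : ℕ) (a : (Fin n → ZMod 2) → ZMod 2) (b : Fin n → ZMod 2) :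
    ((univ.filter (fun p : (Fin n → ZMod 2) × Fin n => a p.1 + b p.2 = p.1 p.2)).card : ℕ)
      = ∑ s : Fin n → ZMod 2, ((univ.filter fun t => s t + b t = a s).card) := by
  rw [Finset.card_filter, Fintype.sum_prod_type]
  apply Fintype.sum_congr
  intro s
  rw [Finset.card_filter]
  apply Fintype.sum_congr
  intro t
  exact if_congr (zmod2_add_iff (a s) (b t) (s t)) rfl rfl

lemma inner_le (n : ℕ) (s b : Fin n → ZMod 2) (x : ZMod 2) :
    ((univ.filter fun t => s t + b t = x).card : ℕ)
      ≤ max ((univ.filter fun t => (s+b) t = 0).card) ((univ.filter fun t => (s+b) t = 1).card) := by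
  have hp : (univ.filter fun t => s t + b t = x) = (univ.filter fun t => (s+b) t = x) := rfl
  rw [hp]
  rcases zmod2_cases x with h | h <;> rw [h]
  · exact le_max_left _ _
  · exact le_max_right _ _

lemma count_le (n : ℕ) (a : (Fin n → ZMod 2) → ZMod 2) (b : Fin n → ZMod 2) :
    ((univ.filter (fun p : (Fin n → ZMod 2) × Fin n => a p.1 + b p.2 = p.1 p.2)).card : ℕ)
      ≤ ∑ u : Fin n → ZMod 2,
          max ((univ.filter fun t => u t = 0).card) ((univ.filter fun t => u t = 1).card) := by
  rw [count_eq_double_sum]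
  calc ∑ s : Fin n → ZMod 2, ((univ.filter fun t => s t + b t = a s).card)
      ≤ ∑ s : Fin n → ZMod 2,
          max ((univ.filter fun t => (s+b) t = 0).card) ((univ.filter fun t => (s+b) t = 1).card) :=
        Finset.sum_le_sum fun s _ => inner_le n s b (a s)
    _ = _ := by
        apply Fintype.sum_equiv (Equiv.addRight b)
        intro s
        rfl

lemma count_opt (n : ℕ) :
    ∃ (a : (Fin n → ZMod 2) → ZMod 2) (b : Fin n → ZMod 2),
      ((univ.filter (fun p : (Fin n → ZMod 2) × Fin n => a p.1 + b p.2 = p.1 p.2)).card : ℕ)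
        = ∑ u : Fin n → ZMod 2,
            max ((univ.filter fun t => u t = 0).card) ((univ.filter fun t => u t = 1).card) := by
  set amaj : (Fin n → ZMod 2) → ZMod 2 := fun s =>
    if ((univ.filter fun t => s t = 0).card) ≤ ((univ.filter fun t => s t = 1).card)
      then 1 else 0 with hamaj
  refine ⟨amaj, 0, ?_⟩
  rw [count_eq_double_sum n amaj 0]
  apply Fintype.sum_congr
  intro s
  have hp : ∀ x : ZMod 2, (univ.filter fun t => s t + (0 : Fin n → ZMod 2) t = x)
      = (univ.filter fun t => s t = x) := by
    intro x
    apply Finset.filter_congr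
    intro t _
    simp
  by_cases hc : ((univ.filter fun t => s t = 0).card) ≤ ((univ.filter fun t => s t = 1).card)
  · have ha : amaj s = 1 := if_pos hc
    rw [ha, hp 1]
    exact (max_eq_right hc).symm
  · have ha : amaj s = 0 := if_neg hc
    rw [ha, hp 0]
    exact (max_eq_left (le_of_not_ge hc)).symm

lemma cb_near (n : ℕ) (hn : 2 ≤ n) :
    |((2*(n/2)).choose (n/2) : ℝ)/4^(n/2) - Real.sqrt (2/(Real.pi*n))| ≤ (n:ℝ)^(-(3:ℝ)/2) := by
  have hpi := Real.pi_gt_three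
  have hnR : (2:ℝ) ≤ (n:ℝ) := by exact_mod_cast hn
  have hnpos : (0:ℝ) < n := by linarith
  set m := n/2 with hm
  set c : ℝ := ((2*m).choose m : ℝ)/4^m with hc
  have hcpos := cb_pos m
  have hL := cb_sq_lower m
  have hU := cb_sq_upper m
  set M : ℝ := (m:ℝ) with hM
  have hM1 : (1:ℝ) ≤ M := by
    have h1 : 1 ≤ m := by omega
    have : (1:ℝ) ≤ (m:ℝ) := by exact_mod_cast h1
    rw [hM]; exact this
  have hpar : n = 2*m ∨ n = 2*m+1 := by omega
  have hcast : (n:ℝ) = 2*M ∨ (n:ℝ) = 2*M+1 := by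
    rcases hpar with h | h
    · left; rw [h]; push_cast; ring
    · right; rw [h]; push_cast; ring
  have FactA : 2*((n:ℝ)-1) ≤ c^2 * (Real.pi * (n:ℝ)^2) := by
    rcases hcast with h | h <;> rw [h]
    · nlinarith [mul_le_mul_of_nonneg_left hL (show (0:ℝ) ≤ 2*M-1 by linarith),
        mul_nonneg (sq_nonneg c) Real.pi_pos.le]
    · nlinarith [mul_le_mul_of_nonneg_left hL (show (0:ℝ) ≤ 2*M+1 by linarith),
        mul_nonneg (sq_nonneg c) Real.pi_pos.le]
  have FactB : c^2 * (Real.pi * (n:ℝ)^2) ≤ 2*((n:ℝ)+1) := by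
    rcases hcast with h | h <;> rw [h]
    · nlinarith [mul_le_mul_of_nonneg_right hU (show (0:ℝ) ≤ 4*M^2 by positivity),
        mul_nonneg (mul_nonneg (sq_nonneg c) Real.pi_pos.le) (sq_nonneg (2*M+1))]
    · nlinarith [hU]
  set T : ℝ := Real.sqrt (2/(Real.pi*n)) with hT
  have harg : (0:ℝ) < 2/(Real.pi*n) := by positivity
  have hTpos : 0 < T := Real.sqrt_pos.mpr harg
  have hT2 : T^2 = 2/(Real.pi*n) := Real.sq_sqrt harg.le
  have hpn2 : (0:ℝ) < Real.pi * (n:ℝ)^2 := by positivity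
  have hc2low : 2*((n:ℝ)-1)/(Real.pi*(n:ℝ)^2) ≤ c^2 := by
    rw [div_le_iff₀ hpn2]; linarith
  have hc2up : c^2 ≤ 2*((n:ℝ)+1)/(Real.pi*(n:ℝ)^2) := by
    rw [le_div_iff₀ hpn2]; linarith
  have hsplit1 : 2/(Real.pi*(n:ℝ)) - 2/(Real.pi*(n:ℝ))/(n:ℝ) = 2*((n:ℝ)-1)/(Real.pi*(n:ℝ)^2) := by
    field_simp
  have hsplit2 : 2/(Real.pi*(n:ℝ)) + 2/(Real.pi*(n:ℝ))/(n:ℝ) = 2*((n:ℝ)+1)/(Real.pi*(n:ℝ)^2) := by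
    field_simp
  have habs2 : |c^2 - T^2| ≤ T^2/(n:ℝ) := by
    rw [abs_le, hT2]
    constructor <;> linarith [hc2low, hc2up, hsplit1, hsplit2]
  have hct : 0 ≤ c + T := by linarith
  have hmul : |c - T| * (c + T) = |c^2 - T^2| := by
    rw [← abs_of_nonneg hct, ← abs_mul]
    congr 1; ring
  have hstep : |c - T| * T ≤ (T/(n:ℝ)) * T := by
    calc |c - T| * T ≤ |c - T| * (c + T) :=
          mul_le_mul_of_nonneg_left (by linarith) (abs_nonneg _)
      _ = |c^2 - T^2| := hmul
      _ ≤ T^2/(n:ℝ) := habs2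
      _ = (T/(n:ℝ)) * T := by ring
  have hfin : |c - T| ≤ T/(n:ℝ) := le_of_mul_le_mul_right hstep hTpos
  have hTle : T ≤ (Real.sqrt (n:ℝ))⁻¹ := by
    rw [hT, ← Real.sqrt_inv]
    apply Real.sqrt_le_sqrt
    rw [div_le_iff₀ (by positivity : (0:ℝ) < Real.pi * n)]
    have he : Real.pi * (n:ℝ) / (n:ℝ) = Real.pi := by field_simp
    calc (2:ℝ) ≤ Real.pi := by linarith
      _ = (n:ℝ)⁻¹ * (Real.pi * n) := by field_simp
  have hrpow : ((n:ℝ))^(-(3:ℝ)/2) = ((n:ℝ) * Real.sqrt (n:ℝ))⁻¹ := by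
    rw [show (-(3:ℝ)/2) = -((3:ℝ)/2) by norm_num, Real.rpow_neg hnpos.le]
    congr 1
    rw [show ((3:ℝ)/2) = 1 + 1/2 by norm_num, Real.rpow_add hnpos, Real.rpow_one,
      ← Real.sqrt_eq_rpow]
  calc |c - T| ≤ T/(n:ℝ) := hfin
    _ ≤ (Real.sqrt (n:ℝ))⁻¹/(n:ℝ) := by
        gcongr
    _ = ((n:ℝ) * Real.sqrt (n:ℝ))⁻¹ := by
        have hsq : (0:ℝ) < Real.sqrt n := Real.sqrt_pos.mpr hnpos
        field_simp
    _ = ((n:ℝ))^(-(3:ℝ)/2) := hrpow.symm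


lemma two_choose (k : ℕ) : 2 * ((2*k+1).choose (k+1)) = (2*k+2).choose (k+1) := by
  have h1 : (2*k+1+1).choose (k+1) = (2*k+1).choose k + (2*k+1).choose (k+1) :=
    Nat.choose_succ_succ (2*k+1) k
  have h2 : (2*k+1).choose ((2*k+1)-(k+1)) = (2*k+1).choose (k+1) := Nat.choose_symm (by omega)
  have h3 : (2*k+1)-(k+1) = k := by omega
  rw [h3] at h2
  have h4 : 2*k+1+1 = 2*k+2 := by omega
  rw [h4] at h1
  omega

/-- The optimal classical bias `β_n` of the INDEX game satisfies
`β_n = √(2/(πn))·(1 + O(1/n))`: there is a constant `C > 0` such that for all `n ≥ 2`,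
`|β_n − √(2/(πn))| ≤ C·n^{−3/2}`. -/
theorem index_game_classical_bias_asymptotics :
    ∃ C : ℝ, 0 < C ∧ ∀ n : ℕ, 2 ≤ n →
      ∃ β : ℝ,
        IsGreatest
          {β' : ℝ | ∃ (a : (Fin n → ZMod 2) → ZMod 2) (b : Fin n → ZMod 2),
            β' = 2 * ((1 / (n * 2 ^ n) : ℝ) *
              ((Finset.univ.filter (fun p : (Fin n → ZMod 2) × Fin n =>
                a p.1 + b p.2 = p.1 p.2)).card : ℝ)) - 1} β ∧
        |β - Real.sqrt (2 / (Real.pi * n))| ≤ C * (n : ℝ) ^ (-(3 : ℝ) / 2) := by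
  refine ⟨1, one_pos, ?_⟩
  intro n hn
  have hn1 : 1 ≤ n := by omega
  have hm1 : 1 ≤ n/2 := by omega
  set m := n/2 with hm
  set β : ℝ := ((2*m).choose m : ℝ)/4^m with hβ
  have hNpos : (0:ℝ) < n := by positivity
  have hPpos : (0:ℝ) < 2^(n-1) := by positivity
  have h2n : (2:ℝ)^n = 2 * 2^(n-1) := by
    rw [← pow_succ']
    congr 1
    omega
  have hvalS : 2 * ((1 / ((n:ℝ) * 2^n)) * ((n * 2^(n-1) + n * ((n-1).choose m) : ℕ) : ℝ)) - 1
      = β := by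
    have hpar : n = 2*m ∨ n = 2*m+1 := by omega
    push_cast
    rw [h2n]
    rcases hpar with h | h
    · -- even: 4^m = 2^n = 2*2^(n-1), 2*C(n-1,m) = C(2m,m)
      have hCnat : 2 * ((n-1).choose m) = (2*m).choose m := by
        have := two_choose (m-1)
        have e1 : 2*(m-1)+1 = n-1 := by omega
        have e2 : (m-1)+1 = m := by omega
        have e3 : 2*(m-1)+2 = 2*m := by omega
        rw [e1, e2, e3] at this
        exact this
      have hC : 2 * (((n-1).choose m : ℝ)) = ((2*m).choose m : ℝ) := by exact_mod_cast hCnat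
      have h4m : (4:ℝ)^m = 2 * 2^(n-1) := by
        rw [show (4:ℝ) = 2^2 by norm_num, ← pow_mul, ← h2n]
        congr 1
        omega
      rw [hβ, h4m, ← hC]
      field_simp
      ring
    · -- odd: 4^m = 2^(n-1), C(n-1,m) = C(2m,m)
      have h4m : (4:ℝ)^m = 2^(n-1) := by
        rw [show (4:ℝ) = 2^2 by norm_num, ← pow_mul]
        congr 1
        omega
      have hC : ((n-1).choose m) = (2*m).choose m := by
        congr 1
        omega
      rw [hβ, h4m, hC]
      field_simp
      ring
  have hS : (∑ u : Fin n → ZMod 2,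
      max ((univ.filter fun t => u t = 0).card) ((univ.filter fun t => u t = 1).card))
      = n * 2^(n-1) + n * ((n-1).choose m) := (sum_G n).trans (sum_choose_max n hn1)
  obtain ⟨a0, b0, hab⟩ := count_opt n
  refine ⟨β, ⟨⟨a0, b0, ?_⟩, ?_⟩, ?_⟩
  · have hcast : (((univ.filter (fun p : (Fin n → ZMod 2) × Fin n =>
        a0 p.1 + b0 p.2 = p.1 p.2)).card : ℕ) : ℝ)
        = ((n * 2^(n-1) + n * ((n-1).choose m) : ℕ) : ℝ) := by
      exact_mod_cast congrArg (Nat.cast : ℕ → ℝ) (hab.trans hS)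
    rw [hcast]
    exact hvalS.symm
  · rintro β' ⟨a, b, rfl⟩
    have hle : ((univ.filter (fun p : (Fin n → ZMod 2) × Fin n =>
        a p.1 + b p.2 = p.1 p.2)).card : ℕ) ≤ n * 2^(n-1) + n * ((n-1).choose m) :=
      hS ▸ count_le n a b
    have hleR : (((univ.filter (fun p : (Fin n → ZMod 2) × Fin n =>
        a p.1 + b p.2 = p.1 p.2)).card : ℕ) : ℝ)
        ≤ ((n * 2^(n-1) + n * ((n-1).choose m) : ℕ) : ℝ) := by exact_mod_cast hle
    calc 2 * ((1 / ((n:ℝ) * 2^n)) * _) - 1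
        ≤ 2 * ((1 / ((n:ℝ) * 2^n)) * ((n * 2^(n-1) + n * ((n-1).choose m) : ℕ) : ℝ)) - 1 := by
          have hpos : (0:ℝ) ≤ 1 / ((n:ℝ) * 2^n) := by positivity
          have := mul_le_mul_of_nonneg_left hleR hpos
          linarith
      _ = β := hvalS
  · rw [one_mul]
    exact cb_near n hn
end
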